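/- Let (Ω, 𝓐, P) be a probability space, let k ≥ 1 be an integer, let w_1,...,w_k ≥ 0 be reals, let G ⊆ {1,...,k}, and let Z : Ω → 𝒫({1,...,k}) be a random subset such that for each i the event {ω : i ∈ Z(ω)} is measurable. Assume: (i) ∑_{i ∉ G} w_i ≤ (1/10)·∑_{i=1}^k w_i, and (ii) for every i ∈ G, P({ω : i ∉ Z(ω)}) ≤ 1/100. Then E[ ∑_{i=1}^k w_i + ∑_{i ∉ Z(ω)} w_i ] ≤ 1.11 · ∑_{i=1}^k w_i. -/

import Mathlib

open MeasureTheory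

/-- Expected one-round total-weight growth bound in Algorithm MWeights: if the
players outside `G` carry at most one tenth of the total weight, and each player
in `G` is missed by the random set `Z` with probability at most `1/100`, then the
expected new total weight `∑ᵢ wᵢ + ∑_{i ∉ Z} wᵢ` is at most `1.11` times the old
total weight. -/
theorem expected_weight_growth
    {Ω : Type*} [MeasurableSpace Ω] (P : Measure Ω) [IsProbabilityMeasure P]
    (k : ℕ) (hk : 1 ≤ k)
    (w : Fin k → ℝ) (hw : ∀ i, 0 ≤ w i)
    (G : Finset (Fin k))
    (Z : Ω → Finset (Fin k))
    (hZmeas : ∀ i, MeasurableSet {ω | i ∈ Z ω})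
    (hG : ∑ i ∈ Finset.univ.filter (fun i => i ∉ G), w i ≤ (1 / 10) * ∑ i, w i)
    (hmiss : ∀ i ∈ G, P {ω | i ∉ Z ω} ≤ 1 / 100) :
    ∫ ω, ((∑ i, w i) + ∑ i ∈ Finset.univ.filter (fun i => i ∉ Z ω), w i) ∂P ≤
      1.11 * ∑ i, w i := by

  have hWnn : 0 ≤ ∑ i, w i := Finset.sum_nonneg fun i _ => hw i
  have hmeasC : ∀ i : Fin k, MeasurableSet {ω | i ∉ Z ω} := fun i => (hZmeas i).compl
  have key : ∀ ω, (∑ i ∈ Finset.univ.filter (fun i => i ∉ Z ω), w i)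
      = ∑ i, Set.indicator {ω | i ∉ Z ω} (fun _ => w i) ω := by
    intro ω
    rw [Finset.sum_filter]
    apply Finset.sum_congr rfl
    intro i _
    by_cases h : i ∈ Z ω <;> simp [Set.indicator, h]
  have hint : ∀ i : Fin k, Integrable (fun ω => Set.indicator {ω | i ∉ Z ω} (fun _ => w i) ω) P :=
    fun i => (integrable_const (w i)).indicator (hmeasC i)
  simp_rw [key]
  rw [integral_add (integrable_const _) (integrable_finset_sum _ fun i _ => hint i),
    integral_const, integral_finset_sum _ fun i _ => hint i]
  simp only [measure_univ, ENNReal.toReal_one, smul_eq_mul, one_mul, probReal_univ]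
  have hval : ∀ i : Fin k, ∫ ω, Set.indicator {ω | i ∉ Z ω} (fun _ => w i) ω ∂P
      = (P {ω | i ∉ Z ω}).toReal * w i := by
    intro i
    rw [integral_indicator_const _ (hmeasC i)]
    simp [smul_eq_mul, measureReal_def]
  simp_rw [hval]
  have h1 : ∑ i ∈ Finset.univ.filter (fun i => i ∈ G), (P {ω | i ∉ Z ω}).toReal * w i
      ≤ (1/100) * ∑ i, w i := by
    calc ∑ i ∈ Finset.univ.filter (fun i => i ∈ G), (P {ω | i ∉ Z ω}).toReal * w i
        ≤ ∑ i ∈ Finset.univ.filter (fun i => i ∈ G), (1/100) * w i := by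
          apply Finset.sum_le_sum
          intro i hi
          have hm := hmiss i (Finset.mem_filter.mp hi).2
          have ht : (P {ω | i ∉ Z ω}).toReal ≤ 1/100 := by
            have := ENNReal.toReal_mono (by norm_num) hm
            simpa using this
          exact mul_le_mul_of_nonneg_right ht (hw i)
      _ = (1/100) * ∑ i ∈ Finset.univ.filter (fun i => i ∈ G), w i := by
          rw [Finset.mul_sum]
      _ ≤ (1/100) * ∑ i, w i := by
          apply mul_le_mul_of_nonneg_left _ (by norm_num)
          exact Finset.sum_le_sum_of_subset_of_nonneg (Finset.filter_subset _ _)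
            (fun i _ _ => hw i)
  have h2 : ∑ i ∈ Finset.univ.filter (fun i => i ∉ G), (P {ω | i ∉ Z ω}).toReal * w i
      ≤ (1/10) * ∑ i, w i := by
    calc ∑ i ∈ Finset.univ.filter (fun i => i ∉ G), (P {ω | i ∉ Z ω}).toReal * w i
        ≤ ∑ i ∈ Finset.univ.filter (fun i => i ∉ G), w i := by
          apply Finset.sum_le_sum
          intro i _
          have ht : (P {ω | i ∉ Z ω}).toReal ≤ 1 := by
            have := ENNReal.toReal_mono ENNReal.one_ne_top (prob_le_one (μ := P) (s := {ω | i ∉ Z ω}))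
            simpa using this
          nlinarith [hw i]
      _ ≤ (1/10) * ∑ i, w i := hG
  have hsplit : ∑ i, (P {ω | i ∉ Z ω}).toReal * w i
      = ∑ i ∈ Finset.univ.filter (fun i => i ∈ G), (P {ω | i ∉ Z ω}).toReal * w i
      + ∑ i ∈ Finset.univ.filter (fun i => i ∉ G), (P {ω | i ∉ Z ω}).toReal * w i :=
    (Finset.sum_filter_add_sum_filter_not _ _ _).symm
  have : (1.11 : ℝ) = 111/100 := by norm_num
  rw [this]
  linarith
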